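/- Let G be an n-vertex graph and k a positive integer such that δ(G) ≥ max{5k−3, n−k}. Let {s_1,t_1},…,{s_r,t_r} with r ≤ k be pairs of vertices of G such that distinct pairs are disjoint (i.e., for i ≠ j, {s_i,t_i} ∩ {s_j,t_j} = ∅; within a pair, s_i = t_i is allowed). Then there exists a family of pairwise vertex-disjoint paths P_1,…,P_r in G such that each P_i is an (s_i,t_i)-path with at most 3 vertices. -/
import Mathlib

/-- Let `G` be an `n`-vertex graph and `k ≥ 1` with `δ(G) ≥ max {5k - 3, n - k}`.
Given `r ≤ k` pairs `{s i, t i}` of vertices that are pairwise disjoint (for `i ≠ j`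
the pairs share no vertex; `s i = t i` is allowed), there is a family of pairwise
vertex-disjoint paths `P i` from `s i` to `t i`, each with at most 3 vertices. -/
theorem rerouting_short_paths {V : Type*} [Fintype V] (G : SimpleGraph V) [DecidableRel G.Adj]
    (k r : ℕ) (hk : 1 ≤ k) (hr : r ≤ k)
    (hδ : max (5 * k - 3) (Fintype.card V - k) ≤ G.minDegree)
    (s t : Fin r → V)
    (hdisj : ∀ i j : Fin r, i ≠ j →
      s i ≠ s j ∧ s i ≠ t j ∧ t i ≠ s j ∧ t i ≠ t j) :
    ∃ P : (i : Fin r) → G.Walk (s i) (t i),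
      (∀ i, (P i).IsPath) ∧
      (∀ i j : Fin r, i ≠ j → ∀ x : V, x ∈ (P i).support → x ∉ (P j).support) ∧
      (∀ i, (P i).support.length ≤ 3) := by
  classical
  rcases Nat.eq_zero_or_pos r with hr0 | hrpos
  · subst hr0
    exact ⟨fun i => i.elim0, fun i => i.elim0, fun i j hij => i.elim0, fun i => i.elim0⟩
  have hV : Nonempty V := ⟨s ⟨0, hrpos⟩⟩
  set n := Fintype.card V with hn
  have hmin1 : 5 * k - 3 ≤ G.minDegree := le_trans (le_max_left _ _) hδ
  have hmin2 : n - k ≤ G.minDegree := le_trans (le_max_right _ _) hδ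
  have hnd : G.minDegree < n :=
    lt_of_le_of_lt (G.minDegree_le_degree (s ⟨0, hrpos⟩)) (G.degree_lt_card_verts _)
  have hcompl : ∀ v : V, ((G.neighborFinset v)ᶜ).card ≤ k := by
    intro v
    have hdeg : n - k ≤ G.degree v := le_trans hmin2 (G.minDegree_le_degree v)
    have hdeg2 : G.degree v < n := G.degree_lt_card_verts v
    have hcc : ((G.neighborFinset v)ᶜ).card = n - G.degree v := by
      rw [Finset.card_compl, G.card_neighborFinset_eq_degree]
    omega
  set E : Finset V := Finset.univ.image s ∪ Finset.univ.image t with hE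
  have hsE : ∀ j, s j ∈ E := fun j => Finset.mem_union_left _ (Finset.mem_image_of_mem s (Finset.mem_univ j))
  have htE : ∀ j, t j ∈ E := fun j => Finset.mem_union_right _ (Finset.mem_image_of_mem t (Finset.mem_univ j))
  set C : Fin r → Finset V :=
    fun i => (G.neighborFinset (s i) ∩ G.neighborFinset (t i)) \ E with hC
  have hCcard : ∀ i, r ≤ (C i).card := by
    intro i
    set X := G.neighborFinset (s i) ∩ G.neighborFinset (t i) with hX
    have hXc : n - 2 * k ≤ X.card := by
      have h1 := hcompl (s i)
      have h2 := hcompl (t i)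
      have hcu : Xᶜ = (G.neighborFinset (s i))ᶜ ∪ (G.neighborFinset (t i))ᶜ := by
        rw [hX, Finset.compl_inter]
      have h3 := Finset.card_union_le ((G.neighborFinset (s i))ᶜ) ((G.neighborFinset (t i))ᶜ)
      have h4 := Finset.card_add_card_compl X
      rw [hcu] at h4
      omega
    have hsub : X ∩ E ⊆ (E.erase (s i)).erase (t i) := by
      intro x hx
      rw [Finset.mem_inter, hX, Finset.mem_inter, SimpleGraph.mem_neighborFinset,
        SimpleGraph.mem_neighborFinset] at hx
      obtain ⟨⟨h1, h2⟩, hxE⟩ := hx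
      exact Finset.mem_erase.2 ⟨(G.ne_of_adj h2).symm, Finset.mem_erase.2 ⟨(G.ne_of_adj h1).symm, hxE⟩⟩
    have hE'sub : (E.erase (s i)).erase (t i) ⊆
        (Finset.univ.erase i).image s ∪ (Finset.univ.erase i).image t := by
      intro x hx
      rw [Finset.mem_erase, Finset.mem_erase] at hx
      obtain ⟨hxt, hxs, hxE⟩ := hx
      rw [hE, Finset.mem_union, Finset.mem_image, Finset.mem_image] at hxE
      rw [Finset.mem_union, Finset.mem_image, Finset.mem_image]
      rcases hxE with ⟨j, -, rfl⟩ | ⟨j, -, rfl⟩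
      · refine Or.inl ⟨j, Finset.mem_erase.2 ⟨?_, Finset.mem_univ j⟩, rfl⟩
        rintro rfl; exact hxs rfl
      · refine Or.inr ⟨j, Finset.mem_erase.2 ⟨?_, Finset.mem_univ j⟩, rfl⟩
        rintro rfl; exact hxt rfl
    have hE'card : ((E.erase (s i)).erase (t i)).card ≤ (r - 1) + (r - 1) := by
      calc ((E.erase (s i)).erase (t i)).card
          ≤ ((Finset.univ.erase i).image s ∪ (Finset.univ.erase i).image t).card :=
            Finset.card_le_card hE'sub
        _ ≤ ((Finset.univ.erase i).image s).card + ((Finset.univ.erase i).image t).card :=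
            Finset.card_union_le _ _
        _ ≤ (Finset.univ.erase i).card + (Finset.univ.erase i).card :=
            Nat.add_le_add (Finset.card_image_le) (Finset.card_image_le)
        _ = (r - 1) + (r - 1) := by
            rw [Finset.card_erase_of_mem (Finset.mem_univ i), Finset.card_univ, Fintype.card_fin]
    have hXIE : (X ∩ E).card ≤ (r - 1) + (r - 1) :=
      le_trans (Finset.card_le_card hsub) hE'card
    have hkey := Finset.card_sdiff_add_card_inter X E
    have : C i = X \ E := rfl
    rw [this]
    omega
  have hall : ∀ S : Finset (Fin r), S.card ≤ (S.biUnion C).card := by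
    intro S
    rcases S.eq_empty_or_nonempty with rfl | ⟨i, hi⟩
    · simp
    · calc S.card ≤ r := by
            simpa [Finset.card_univ] using Finset.card_le_univ S
        _ ≤ (C i).card := hCcard i
        _ ≤ (S.biUnion C).card :=
            Finset.card_le_card (fun x hx => Finset.mem_biUnion.2 ⟨i, hi, hx⟩)
  obtain ⟨m, hminj, hmC⟩ := (Finset.all_card_le_biUnion_card_iff_exists_injective C).1 hall
  have hms : ∀ i, G.Adj (s i) (m i) := by
    intro i
    have := hmC i
    rw [hC, Finset.mem_sdiff, Finset.mem_inter, SimpleGraph.mem_neighborFinset,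
      SimpleGraph.mem_neighborFinset] at this
    exact this.1.1
  have hmt : ∀ i, G.Adj (t i) (m i) := by
    intro i
    have := hmC i
    rw [hC, Finset.mem_sdiff, Finset.mem_inter, SimpleGraph.mem_neighborFinset,
      SimpleGraph.mem_neighborFinset] at this
    exact this.1.2
  have hmE : ∀ i, m i ∉ E := by
    intro i
    have := hmC i
    rw [hC, Finset.mem_sdiff] at this
    exact this.2
  let P : (i : Fin r) → G.Walk (s i) (t i) := fun i =>
    if h : s i = t i then SimpleGraph.Walk.nil.copy rfl h
    else if h2 : G.Adj (s i) (t i) then SimpleGraph.Walk.cons h2 SimpleGraph.Walk.nil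
    else SimpleGraph.Walk.cons (hms i) (SimpleGraph.Walk.cons (hmt i).symm SimpleGraph.Walk.nil)
  have hPsupp : ∀ i, ∀ x ∈ (P i).support, x = s i ∨ x = t i ∨ x = m i := by
    intro i x hx
    simp only [P] at hx
    split_ifs at hx with h h2 <;> simp_all <;> tauto
  have hPpath : ∀ i, (P i).IsPath := by
    intro i
    simp only [P]
    split_ifs with h h2
    · simp
    · simp [SimpleGraph.Walk.isPath_def, h]
    · simp [SimpleGraph.Walk.isPath_def, h, (hms i).ne, (hmt i).ne']
  have hPlen : ∀ i, (P i).support.length ≤ 3 := by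
    intro i
    simp only [P]
    split_ifs with h h2 <;> simp
  refine ⟨P, hPpath, ?_, hPlen⟩
  intro i j hij x hxi hxj
  obtain ⟨h1, h2, h3, h4⟩ := hdisj i j hij
  have f1 : m i ≠ s j := fun e => hmE i (e ▸ hsE j)
  have f2 : m i ≠ t j := fun e => hmE i (e ▸ htE j)
  have f3 : m j ≠ s i := fun e => hmE j (e ▸ hsE i)
  have f4 : m j ≠ t i := fun e => hmE j (e ▸ htE i)
  have f5 : m i ≠ m j := fun e => hij (hminj e)
  have hxi' := hPsupp i x hxi
  have hxj' := hPsupp j x hxj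
  rcases hxi' with rfl | rfl | rfl <;> rcases hxj' with e | e | e <;> simp_all
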